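/- Let T, w, r be positive integers and p = 1 - w^w r^r / (w+r)^{w+r}. If N > (w+r) log T / (−log p), then there exists a (w,r)-cover-free family with ground set size N and T blocks. -/

import Mathlib

open Finset Real

/-- A set system `F` on `X` is a `(w,r;d)`-cover-free family. -/
def IsCFF {X : Type} [Fintype X] [DecidableEq X] (w r d : ℕ) (F : Finset (Finset X)) : Prop :=
  ∀ WS RS : Finset (Finset X), WS ⊆ F → RS ⊆ F → WS.card = w → RS.card = r →
    Disjoint WS RS → d < ((WS.inf id) \ (RS.sup id)).card

lemma filt_lt_card {n w : ℕ} (h : w < n) :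
    ((univ : Finset (Fin n)).filter (fun a : Fin n => (a : ℕ) < w)).card = w := by
  have : (univ : Finset (Fin n)).filter (fun a : Fin n => (a : ℕ) < w)
      = Finset.Iio (⟨w, h⟩ : Fin n) := by
    ext a; simp [Fin.lt_def]
  rw [this, Fin.card_Iio]

lemma filt_not_lt_card {n w : ℕ} (h : w < n) :
    ((univ : Finset (Fin n)).filter (fun a : Fin n => ¬ (a : ℕ) < w)).card = n - w := by
  rw [Finset.filter_not, Finset.card_sdiff_of_subset (Finset.filter_subset _ _), filt_lt_card h]
  simp

/-- Column finsets for the good event. -/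
def GSet (T s w : ℕ) (W R : Finset (Fin T)) : Finset (Fin T → Fin s) :=
  Fintype.piFinset (fun i => if i ∈ W then univ.filter (fun a : Fin s => (a : ℕ) < w)
    else if i ∈ R then univ.filter (fun a : Fin s => ¬ (a : ℕ) < w) else univ)

lemma mem_GSet {T s w : ℕ} {W R : Finset (Fin T)} (hd : Disjoint W R) {v : Fin T → Fin s} :
    v ∈ GSet T s w W R ↔ (∀ i ∈ W, (v i : ℕ) < w) ∧ (∀ j ∈ R, ¬ (v j : ℕ) < w) := by
  rw [GSet, Fintype.mem_piFinset]
  constructor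
  · intro h
    refine ⟨fun i hi => ?_, fun j hj => ?_⟩
    · have := h i; simp [hi] at this; exact this
    · have hjW : j ∉ W := fun hc => (Finset.disjoint_left.mp hd hc) hj
      have := h j; simp [hj, hjW] at this; omega
  · rintro ⟨h1, h2⟩ i
    by_cases hi : i ∈ W
    · simp [hi, h1 i hi]
    · by_cases hiR : i ∈ R
      · have := h2 i hiR; simp [hi, hiR]; omega
      · simp [hi, hiR]

lemma card_GSet {T w r : ℕ} (hw : 0 < w) (hr : 0 < r) {W R : Finset (Fin T)}
    (hW : W.card = w) (hR : R.card = r) (hd : Disjoint W R) :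
    (GSet T (w + r) w W R).card = w ^ w * r ^ r * (w + r) ^ (T - (w + r)) := by
  have hwlt : w < w + r := by omega
  rw [GSet, Fintype.card_piFinset]
  have hcol : ∀ i : Fin T,
      ((if i ∈ W then univ.filter (fun a : Fin (w + r) => (a : ℕ) < w)
        else if i ∈ R then univ.filter (fun a : Fin (w + r) => ¬ (a : ℕ) < w) else univ)).card
      = if i ∈ W then w else if i ∈ R then r else (w + r) := by
    intro i
    by_cases hi : i ∈ W
    · simp [hi, filt_lt_card hwlt]
    · by_cases hiR : i ∈ R
      · have := filt_not_lt_card (w := w) hwlt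
        simp only [not_lt] at this
        simp [hi, hiR, this]
      · simp [hi, hiR]
  rw [Finset.prod_congr rfl (fun i _ => hcol i)]
  rw [← Finset.prod_mul_prod_compl (W ∪ R)]
  have h1 : ∏ i ∈ W ∪ R, (if i ∈ W then w else if i ∈ R then r else (w + r)) = w ^ w * r ^ r := by
    rw [Finset.prod_union hd]
    rw [Finset.prod_congr rfl (fun i hi => by simp [hi] : ∀ i ∈ W, _ = w)]
    rw [Finset.prod_congr rfl (fun i hi => by
      have hiW : i ∉ W := fun hc => (Finset.disjoint_left.mp hd hc) hi
      simp [hi, hiW] : ∀ i ∈ R, _ = r)]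
    rw [Finset.prod_const, Finset.prod_const, hW, hR]
  have h2 : ∏ i ∈ (W ∪ R)ᶜ, (if i ∈ W then w else if i ∈ R then r else (w + r))
      = (w + r) ^ (T - (w + r)) := by
    rw [Finset.prod_congr rfl (fun i hi => by
      simp only [Finset.mem_compl, Finset.mem_union, not_or] at hi
      simp [hi.1, hi.2] : ∀ i ∈ (W ∪ R)ᶜ, _ = (w + r))]
    rw [Finset.prod_const, Finset.card_compl, Finset.card_union_of_disjoint hd, hW, hR]
    simp
  rw [h1, h2]

lemma exists_good (w r N T : ℕ) (hw : 0 < w) (hr : 0 < r) (hTs : w + r ≤ T)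
    (hkey : T ^ (w + r) * ((w + r) ^ (w + r) - w ^ w * r ^ r) ^ N < ((w + r) ^ (w + r)) ^ N) :
    ∃ ω : Fin N → Fin T → Fin (w + r), ∀ W R : Finset (Fin T),
      W.card = w → R.card = r → Disjoint W R →
      ∃ x, (∀ i ∈ W, (ω x i : ℕ) < w) ∧ (∀ j ∈ R, ¬ (ω x j : ℕ) < w) := by
  classical
  set s := w + r with hs
  -- bad set for a pair
  set Bad : Finset (Fin T) × Finset (Fin T) → Finset (Fin N → Fin T → Fin s) :=
    fun p => Fintype.piFinset (fun _ : Fin N => univ \ GSet T s w p.1 p.2) with hBad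
  set P : Finset (Finset (Fin T) × Finset (Fin T)) :=
    ((univ : Finset (Fin T)).powersetCard w ×ˢ (univ : Finset (Fin T)).powersetCard r).filter
      (fun p => Disjoint p.1 p.2) with hP
  have hcardBad : ∀ p ∈ P, (Bad p).card = (s ^ T - w ^ w * r ^ r * s ^ (T - s)) ^ N := by
    intro p hp
    simp only [hP, Finset.mem_filter, Finset.mem_product, Finset.mem_powersetCard] at hp
    obtain ⟨⟨⟨-, hW⟩, -, hR⟩, hd⟩ := hp
    rw [hBad]
    simp only [Fintype.card_piFinset, Finset.card_sdiff_of_subset (Finset.subset_univ _),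
      Finset.card_univ, Fintype.card_fun, Fintype.card_fin, card_GSet hw hr hW hR hd,
      Finset.prod_const, Finset.card_univ, Fintype.card_fin]
    rw [show (GSet T s w p.1 p.2).card = w ^ w * r ^ r * s ^ (T - s) from card_GSet hw hr hW hR hd]
  have hPcard : P.card ≤ T ^ w * T ^ r := by
    calc P.card ≤ (((univ : Finset (Fin T)).powersetCard w) ×ˢ
        ((univ : Finset (Fin T)).powersetCard r)).card := Finset.card_filter_le _ _
    _ = T.choose w * T.choose r := by
        rw [Finset.card_product, Finset.card_powersetCard, Finset.card_powersetCard]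
        simp
    _ ≤ T ^ w * T ^ r := Nat.mul_le_mul (Nat.choose_le_pow T w) (Nat.choose_le_pow T r)
  have hsum : ∑ p ∈ P, (Bad p).card < Fintype.card (Fin N → Fin T → Fin s) := by
    rw [Finset.sum_congr rfl hcardBad, Finset.sum_const, smul_eq_mul]
    have hfac : s ^ T - w ^ w * r ^ r * s ^ (T - s) = (s ^ s - w ^ w * r ^ r) * s ^ (T - s) := by
      rw [Nat.sub_mul, ← pow_add]
      congr 2
      omega
    have hBA : w ^ w * r ^ r < s ^ s := by
      calc w ^ w * r ^ r ≤ w ^ w * s ^ r := by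
            exact Nat.mul_le_mul_left _ (Nat.pow_le_pow_left (by omega) r)
      _ < s ^ w * s ^ r := by
            have : w ^ w < s ^ w := Nat.pow_lt_pow_left (by omega) (by omega)
            exact Nat.mul_lt_mul_of_lt_of_le this (le_refl _) (by positivity)
      _ = s ^ s := by rw [← pow_add]
    have hΩ : Fintype.card (Fin N → Fin T → Fin s) = ((s ^ s) ^ N) * (s ^ (T - s)) ^ N := by
      simp only [Fintype.card_fun, Fintype.card_fin]
      rw [← mul_pow, ← pow_add]
      congr 2
      omega
    rw [hfac, hΩ, mul_pow]
    calc P.card * ((s ^ s - w ^ w * r ^ r) ^ N * (s ^ (T - s)) ^ N)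
        ≤ (T ^ w * T ^ r) * ((s ^ s - w ^ w * r ^ r) ^ N * (s ^ (T - s)) ^ N) :=
          Nat.mul_le_mul_right _ hPcard
      _ = (T ^ (w + r) * (s ^ s - w ^ w * r ^ r) ^ N) * (s ^ (T - s)) ^ N := by
          rw [← pow_add]; ring
      _ < ((s ^ s) ^ N) * (s ^ (T - s)) ^ N := by
          apply Nat.mul_lt_mul_of_lt_of_le hkey (le_refl _)
          positivity
  -- find ω not in any bad set
  have : ∃ ω : Fin N → Fin T → Fin s, ∀ p ∈ P, ω ∉ Bad p := by
    by_contra hcon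
    push_neg at hcon
    have hsub : (univ : Finset (Fin N → Fin T → Fin s)) ⊆ P.biUnion Bad := by
      intro ω _
      obtain ⟨p, hp, hm⟩ := hcon ω
      exact Finset.mem_biUnion.mpr ⟨p, hp, hm⟩
    have := Finset.card_le_card hsub
    rw [Finset.card_univ] at this
    exact absurd (this.trans (Finset.card_biUnion_le)) (not_le.mpr hsum)
  obtain ⟨ω, hω⟩ := this
  refine ⟨ω, fun W R hW hR hd => ?_⟩
  have hpP : (W, R) ∈ P := by
    simp only [hP, Finset.mem_filter, Finset.mem_product, Finset.mem_powersetCard]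
    exact ⟨⟨⟨Finset.subset_univ _, hW⟩, Finset.subset_univ _, hR⟩, hd⟩
  have hnb := hω (W, R) hpP
  rw [hBad] at hnb
  simp only [Fintype.mem_piFinset, Finset.mem_sdiff, Finset.mem_univ, true_and, not_forall,
    not_not] at hnb
  obtain ⟨x, hx⟩ := hnb
  exact ⟨x, (mem_GSet hd).mp hx⟩

lemma nat_lt_cast_facts (w r : ℕ) (hw : 0 < w) (hr : 0 < r) :
    w ^ w * r ^ r < (w + r) ^ (w + r) := by
  calc w ^ w * r ^ r ≤ w ^ w * (w + r) ^ r :=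
        Nat.mul_le_mul_left _ (Nat.pow_le_pow_left (by omega) r)
    _ < (w + r) ^ w * (w + r) ^ r :=
        Nat.mul_lt_mul_of_lt_of_le (Nat.pow_lt_pow_left (by omega) (by omega)) (le_refl _)
          (by positivity)
    _ = (w + r) ^ (w + r) := by rw [← pow_add]

lemma key_ineq (w r N T : ℕ) (hw : 0 < w) (hr : 0 < r) (hT : 0 < T)
    (hN : (N : ℝ) >
      ((w + r : ℝ) * Real.logb 2 T) /
        (-Real.logb 2 (1 - (w : ℝ) ^ w * (r : ℝ) ^ r / ((w : ℝ) + r) ^ (w + r)))) :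
    T ^ (w + r) * ((w + r) ^ (w + r) - w ^ w * r ^ r) ^ N < ((w + r) ^ (w + r)) ^ N := by
  have hBAn := nat_lt_cast_facts w r hw hr
  set A : ℝ := ((w : ℝ) + r) ^ (w + r) with hA
  set B : ℝ := (w : ℝ) ^ w * (r : ℝ) ^ r with hB
  have hA0 : 0 < A := by positivity
  have hB0 : 0 < B := by positivity
  have hBA : B < A := by
    rw [hA, hB]
    have := hBAn
    push_cast
    exact_mod_cast (by exact_mod_cast this : ((w ^ w * r ^ r : ℕ) : ℝ) < ((w + r : ℕ) ^ (w + r) : ℝ))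
  have hp0 : (0 : ℝ) < 1 - B / A := by
    rw [sub_pos, div_lt_one hA0]; exact hBA
  have hp1 : 1 - B / A < 1 := by
    have : 0 < B / A := div_pos hB0 hA0
    linarith
  have hlp : Real.logb 2 (1 - B / A) < 0 := Real.logb_neg (by norm_num) hp0 hp1
  have hd : 0 < -Real.logb 2 (1 - B / A) := by linarith
  have hN' : ((w : ℝ) + r) * Real.logb 2 T < N * (-Real.logb 2 (1 - B / A)) := by
    have := hN
    rw [gt_iff_lt, div_lt_iff₀ hd] at this
    linarith
  -- rewrite -logb p
  have hplog : -Real.logb 2 (1 - B / A) = Real.logb 2 A - Real.logb 2 (A - B) := by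
    have h1 : 1 - B / A = (A - B) / A := by field_simp
    rw [h1, Real.logb_div (by linarith) (ne_of_gt hA0)]
    ring
  -- real inequality
  have hAB0 : (0 : ℝ) < A - B := by linarith
  have hreal : (T : ℝ) ^ (w + r) * (A - B) ^ N < A ^ N := by
    have hT0 : (0 : ℝ) < T := by exact_mod_cast hT
    have hL0 : (0 : ℝ) < (T : ℝ) ^ (w + r) * (A - B) ^ N :=
      mul_pos (pow_pos hT0 _) (pow_pos hAB0 _)
    have hR0 : (0 : ℝ) < A ^ N := pow_pos hA0 _
    rw [← Real.logb_lt_logb_iff (by norm_num : (1 : ℝ) < 2) hL0 hR0]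
    rw [Real.logb_mul (ne_of_gt (pow_pos hT0 _)) (ne_of_gt (pow_pos hAB0 _)),
      Real.logb_pow, Real.logb_pow, Real.logb_pow]
    rw [hplog] at hN'
    push_cast at hN' ⊢
    nlinarith [hN']
  -- back to ℕ
  have hcast : (((w + r) ^ (w + r) - w ^ w * r ^ r : ℕ) : ℝ) = A - B := by
    rw [Nat.cast_sub hBAn.le]; push_cast [hA, hB]; ring
  have : ((T ^ (w + r) * ((w + r) ^ (w + r) - w ^ w * r ^ r) ^ N : ℕ) : ℝ)
      < ((((w + r) ^ (w + r)) ^ N : ℕ) : ℝ) := by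
    rw [Nat.cast_mul, Nat.cast_pow, Nat.cast_pow, hcast, Nat.cast_pow, Nat.cast_pow]
    push_cast
    exact hreal
  exact_mod_cast this

lemma T_lt_two_pow (w r N T : ℕ) (hw : 0 < w) (hr : 0 < r) (hT : 0 < T)
    (hN : (N : ℝ) >
      ((w + r : ℝ) * Real.logb 2 T) /
        (-Real.logb 2 (1 - (w : ℝ) ^ w * (r : ℝ) ^ r / ((w : ℝ) + r) ^ (w + r)))) :
    T < 2 ^ N := by
  have hBAn := nat_lt_cast_facts w r hw hr
  set A : ℝ := ((w : ℝ) + r) ^ (w + r) with hA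
  set B : ℝ := (w : ℝ) ^ w * (r : ℝ) ^ r with hB
  have hA0 : 0 < A := by positivity
  have hB0 : 0 < B := by positivity
  have hBA : B < A := by
    rw [hA, hB]
    exact_mod_cast (by exact_mod_cast hBAn :
      ((w ^ w * r ^ r : ℕ) : ℝ) < ((w + r : ℕ) ^ (w + r) : ℝ))
  -- 4 B ≤ A
  have h4n : 4 * (w ^ w * r ^ r) ≤ (w + r) ^ (w + r) := by
    obtain ⟨a, rfl⟩ : ∃ a, w = a + 1 := ⟨w - 1, by omega⟩
    obtain ⟨b, rfl⟩ : ∃ b, r = b + 1 := ⟨r - 1, by omega⟩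
    have e1 : (a + 1) ^ (a + 1) = (a + 1) ^ a * (a + 1) := by ring
    have e2 : (b + 1) ^ (b + 1) = (b + 1) ^ b * (b + 1) := by ring
    have e3 : (a + 1 + (b + 1)) ^ (a + 1 + (b + 1))
        = (a + b + 2) ^ a * ((a + b + 2) ^ b * (a + b + 2) ^ 2) := by
      rw [show a + 1 + (b + 1) = a + (b + 2) by ring, pow_add, pow_add]
      ring
    rw [e1, e2, e3]
    have h1 : (a + 1) ^ a ≤ (a + b + 2) ^ a := Nat.pow_le_pow_left (by omega) a
    have h2 : (b + 1) ^ b ≤ (a + b + 2) ^ b := Nat.pow_le_pow_left (by omega) b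
    have h3 : 4 * ((a + 1) * (b + 1)) ≤ (a + b + 2) ^ 2 := by
      have h2ab : 2 * a * b ≤ a ^ 2 + b ^ 2 := two_mul_le_add_sq a b
      nlinarith [h2ab]
    calc 4 * ((a + 1) ^ a * (a + 1) * ((b + 1) ^ b * (b + 1)))
        = ((a + 1) ^ a * (b + 1) ^ b) * (4 * ((a + 1) * (b + 1))) := by ring
      _ ≤ ((a + b + 2) ^ a * (a + b + 2) ^ b) * (a + b + 2) ^ 2 :=
          Nat.mul_le_mul (Nat.mul_le_mul h1 h2) h3
      _ = (a + b + 2) ^ a * ((a + b + 2) ^ b * (a + b + 2) ^ 2) := by ring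
  have h4 : 4 * B ≤ A := by
    rw [hA, hB]
    exact_mod_cast (by exact_mod_cast h4n :
      ((4 * (w ^ w * r ^ r) : ℕ) : ℝ) ≤ ((w + r : ℕ) ^ (w + r) : ℝ))
  have hphalf : (1 : ℝ) / 2 ≤ 1 - B / A := by
    have : B / A ≤ 1 / 4 := by
      rw [div_le_div_iff₀ hA0 (by norm_num)]
      linarith
    linarith
  have hp0 : (0 : ℝ) < 1 - B / A := by linarith
  have hp1 : 1 - B / A < 1 := by
    have : 0 < B / A := div_pos hB0 hA0
    linarith
  have hlp : Real.logb 2 (1 - B / A) < 0 := Real.logb_neg (by norm_num) hp0 hp1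
  have hd : 0 < -Real.logb 2 (1 - B / A) := by linarith
  have hdle : -Real.logb 2 (1 - B / A) ≤ 1 := by
    have h1 : Real.logb 2 ((1 : ℝ) / 2) ≤ Real.logb 2 (1 - B / A) :=
      Real.logb_le_logb_of_le (by norm_num) (by norm_num) hphalf
    have h2 : Real.logb 2 ((1 : ℝ) / 2) = -1 := by
      rw [show (1 : ℝ) / 2 = 2⁻¹ by norm_num, Real.logb_inv, Real.logb_self_eq_one] <;> norm_num
    linarith
  have hTlog : Real.logb 2 T < N := by
    have hlogT : 0 ≤ Real.logb 2 T := Real.logb_nonneg (by norm_num) (by exact_mod_cast hT)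
    have : Real.logb 2 T ≤ ((w + r : ℝ) * Real.logb 2 T) / (-Real.logb 2 (1 - B / A)) := by
      rw [le_div_iff₀ hd]
      calc Real.logb 2 T * (-Real.logb 2 (1 - B / A)) ≤ Real.logb 2 T * 1 := by
            exact mul_le_mul_of_nonneg_left hdle hlogT
        _ ≤ (w + r : ℝ) * Real.logb 2 T := by
            have hwr : (1 : ℝ) ≤ (w : ℝ) + r := by
              have : (1 : ℕ) ≤ w + r := by omega
              exact_mod_cast this
            nlinarith
    linarith [hN]
  have : (T : ℝ) < 2 ^ (N : ℕ) := by
    have hT0 : (0 : ℝ) < T := by exact_mod_cast hT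
    have h2 : (T : ℝ) < (2 : ℝ) ^ (N : ℝ) := by
      rw [← Real.rpow_logb (by norm_num : (0:ℝ) < 2) (by norm_num) hT0]
      exact Real.rpow_lt_rpow_of_exponent_lt (by norm_num) hTlog
    rwa [Real.rpow_natCast] at h2
  exact_mod_cast this


/-- Probabilistic existence: with `p = 1 - w^w r^r/(w+r)^{w+r}`, if
`N > (w+r) log₂ T / (-log₂ p)`, then a `(w,r)`-CFF(N,T) exists. -/
theorem prob_cff_exists (w r N T : ℕ) (hw : 0 < w) (hr : 0 < r) (hT : 0 < T)
    (hN : (N : ℝ) >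
      ((w + r : ℝ) * Real.logb 2 T) /
        (-Real.logb 2 (1 - (w : ℝ) ^ w * (r : ℝ) ^ r / ((w : ℝ) + r) ^ (w + r)))) :
    ∃ F : Finset (Finset (Fin N)), F.card = T ∧ IsCFF w r 0 F := by
  classical
  by_cases hTs : w + r ≤ T
  · -- main probabilistic case
    obtain ⟨ω, hω⟩ := exists_good w r N T hw hr hTs (key_ineq w r N T hw hr hT hN)
    set Bk : Fin T → Finset (Fin N) := fun i => univ.filter (fun x => (ω x i : ℕ) < w) with hBk
    have hmem : ∀ i x, x ∈ Bk i ↔ (ω x i : ℕ) < w := by intro i x; simp [hBk]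
    have hinj : Function.Injective Bk := by
      intro i j hij
      by_contra hne
      have hsub1 : ({i} : Finset (Fin T)) ⊆ univ \ {j} := by simp [Finset.subset_iff, hne]
      have hc1 : ({i} : Finset (Fin T)).card ≤ w := by simp; omega
      have hc2 : w ≤ (univ \ {j} : Finset (Fin T)).card := by
        rw [Finset.card_sdiff_of_subset (Finset.subset_univ _)]
        simp; omega
      obtain ⟨W, hiW, hWsub, hWcard⟩ := Finset.exists_subsuperset_card_eq hsub1 hc1 hc2
      have hjW : j ∉ W := fun hc => by
        have := hWsub hc; simp at this
      have hjsub : ({j} : Finset (Fin T)) ⊆ univ \ W := by simp [Finset.subset_iff, hjW]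
      have hc3 : ({j} : Finset (Fin T)).card ≤ r := by simp; omega
      have hc4 : r ≤ (univ \ W : Finset (Fin T)).card := by
        rw [Finset.card_sdiff_of_subset (Finset.subset_univ _), hWcard]
        simp; omega
      obtain ⟨R, hjR, hRsub, hRcard⟩ := Finset.exists_subsuperset_card_eq hjsub hc3 hc4
      have hdisj : Disjoint W R := by
        rw [Finset.disjoint_left]
        intro a haW haR
        have := hRsub haR
        simp at this
        exact this haW
      obtain ⟨x, hx1, hx2⟩ := hω W R hWcard hRcard hdisj
      have hxi : x ∈ Bk i := (hmem i x).mpr (hx1 i (hiW (Finset.mem_singleton_self i)))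
      have hxj : x ∉ Bk j := fun hc => hx2 j (hjR (Finset.mem_singleton_self j)) ((hmem j x).mp hc)
      rw [hij] at hxi
      exact hxj hxi
    refine ⟨univ.image Bk, ?_, ?_⟩
    · rw [Finset.card_image_of_injective _ hinj, Finset.card_univ, Fintype.card_fin]
    · intro WS RS hWS hRS hcW hcR hdisj
      set W : Finset (Fin T) := univ.filter (fun i => Bk i ∈ WS) with hWdef
      set R : Finset (Fin T) := univ.filter (fun i => Bk i ∈ RS) with hRdef
      have hWim : W.image Bk = WS := by
        ext t
        simp only [Finset.mem_image, hWdef, Finset.mem_filter, Finset.mem_univ, true_and]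
        constructor
        · rintro ⟨i, hi, rfl⟩; exact hi
        · intro ht
          obtain ⟨i, -, rfl⟩ := Finset.mem_image.mp (hWS ht)
          exact ⟨i, ht, rfl⟩
      have hRim : R.image Bk = RS := by
        ext t
        simp only [Finset.mem_image, hRdef, Finset.mem_filter, Finset.mem_univ, true_and]
        constructor
        · rintro ⟨i, hi, rfl⟩; exact hi
        · intro ht
          obtain ⟨i, -, rfl⟩ := Finset.mem_image.mp (hRS ht)
          exact ⟨i, ht, rfl⟩
      have hWc : W.card = w := by
        rw [← hcW, ← hWim, Finset.card_image_of_injective _ hinj]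
      have hRc : R.card = r := by
        rw [← hcR, ← hRim, Finset.card_image_of_injective _ hinj]
      have hd2 : Disjoint W R := by
        rw [Finset.disjoint_left]
        intro a haW haR
        rw [hWdef, Finset.mem_filter] at haW
        rw [hRdef, Finset.mem_filter] at haR
        exact Finset.disjoint_left.mp hdisj haW.2 haR.2
      obtain ⟨x, hx1, hx2⟩ := hω W R hWc hRc hd2
      rw [Finset.card_pos]
      refine ⟨x, Finset.mem_sdiff.mpr ⟨?_, ?_⟩⟩
      · have hne : WS.Nonempty := Finset.card_pos.mp (by omega)
        rw [← Finset.inf'_eq_inf hne, Finset.mem_inf']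
        intro t ht
        obtain ⟨i, hiW, rfl⟩ := Finset.mem_image.mp (hWim ▸ ht)
        rw [hWdef, Finset.mem_filter] at hiW
        exact (hmem i x).mpr (hx1 i (by rw [hWdef, Finset.mem_filter]; exact hiW))
      · intro hc
        obtain ⟨t, ht, hxt⟩ := Finset.mem_sup.mp hc
        obtain ⟨j, hjR, rfl⟩ := Finset.mem_image.mp (hRim ▸ ht)
        exact hx2 j hjR ((hmem j x).mp hxt)
  · -- vacuous case: T < w + r
    have hT2 : T ≤ Fintype.card (Finset (Fin N)) := by
      rw [Fintype.card_finset, Fintype.card_fin]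
      exact (T_lt_two_pow w r N T hw hr hT hN).le
    obtain ⟨F, -, hF⟩ := Finset.exists_superset_card_eq
      (s := (∅ : Finset (Finset (Fin N)))) (by simp) hT2
    refine ⟨F, hF, fun WS RS hWS hRS hcW hcR hd => absurd ?_ (by omega : ¬ w + r ≤ T)⟩
    calc w + r = (WS ∪ RS).card := by rw [Finset.card_union_of_disjoint hd, hcW, hcR]
      _ ≤ F.card := Finset.card_le_card (Finset.union_subset hWS hRS)
      _ = T := hF
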